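/- Let E be a real inner product space, let T ≥ 1 be a natural number, let μ₀ > 0, σ > 0 and Δ > 0, and let L : E → ℝ be differentiable and satisfy ⟨∇L(x), x − y⟩ ≥ L(x) − L(y) + (μ₀/2)·‖x − y‖² for all x, y ∈ E. Let θ* ∈ E, and let θ_0, θ_1, …, θ_T ∈ E satisfy θ_{t+1} = θ_t − α_t·g_t for t = 0, …, T−1, where α_t = 2/(μ₀(t+1)), each g_t ∈ E satisfies ‖g_t‖ ≤ σ, and ‖θ_t − θ*‖ ≤ Δ for all t = 0, …, T−1. Then ∑_{t=0}^{T−1} t·(L(θ_t) − L(θ*)) ≤ σ²·T/μ₀ + ∑_{t=0}^{T−1} t·Δ·‖∇L(θ_t) − g_t‖. -/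

import Mathlib

open scoped RealInnerProductSpace

/-- Summed weighted bound for approximate gradient descent on a strongly convex objective
with decaying learning rate `α_t = 2/(μ₀(t+1))`. -/
theorem approx_gd_weighted_sum_bound_strongly_convex
    {E : Type*} [NormedAddCommGroup E] [InnerProductSpace ℝ E]
    (T : ℕ) (hT : 1 ≤ T)
    (μ₀ σ Δ : ℝ) (hμ₀ : 0 < μ₀) (hσ : 0 < σ) (hΔ : 0 < Δ)
    (L : E → ℝ) (gradL : E → E)
    (hgrad : ∀ x, HasFDerivAt L (innerSL ℝ (gradL x)) x)
    (hsc : ∀ x y : E, ⟪gradL x, x - y⟫ ≥ L x - L y + (μ₀ / 2) * ‖x - y‖ ^ 2)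
    (θstar : E) (θ g : ℕ → E)
    (hupd : ∀ t < T, θ (t + 1) = θ t - (2 / (μ₀ * (t + 1))) • g t)
    (hg : ∀ t < T, ‖g t‖ ≤ σ)
    (hθ : ∀ t < T, ‖θ t - θstar‖ ≤ Δ) :
    ∑ t ∈ Finset.range T, (t : ℝ) * (L (θ t) - L θstar)
      ≤ σ ^ 2 * T / μ₀
        + ∑ t ∈ Finset.range T, (t : ℝ) * Δ * ‖gradL (θ t) - g t‖ := by
  have hμ : μ₀ ≠ 0 := ne_of_gt hμ₀
  have key : ∀ t ∈ Finset.range T, (t : ℝ) * (L (θ t) - L θstar) ≤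
      μ₀/4 * ((t:ℝ)*((t:ℝ)-1)*‖θ t - θstar‖^2 - ((t:ℝ)+1)*(t:ℝ)*‖θ (t+1) - θstar‖^2)
      + σ^2/μ₀ * ((t:ℝ)/((t:ℝ)+1)) + (t:ℝ)*Δ*‖gradL (θ t) - g t‖ := by
    intro t htm
    rw [Finset.mem_range] at htm
    have hn0 : (0:ℝ) ≤ (t:ℝ) := Nat.cast_nonneg t
    have hn1 : (0:ℝ) < (t:ℝ) + 1 := by linarith
    set x := θ t - θstar with hx
    set α : ℝ := 2/(μ₀*((t:ℝ)+1)) with hαdef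
    have hα : 0 < α := by rw [hαdef]; positivity
    have hθeq : θ (t+1) - θstar = x - α • g t := by
      rw [hupd t htm, hx, hαdef]; abel
    have hsq : ‖θ (t+1) - θstar‖^2 = ‖x‖^2 - 2*(α*⟪g t, x⟫) + α^2*‖g t‖^2 := by
      rw [hθeq, norm_sub_sq_real, real_inner_smul_right, real_inner_comm, norm_smul,
        Real.norm_eq_abs, abs_of_pos hα]
      ring
    have hA := hsc (θ t) θstar
    have hB : ⟪gradL (θ t) - g t, x⟫ ≤ ‖gradL (θ t) - g t‖ * Δ :=
      le_trans (real_inner_le_norm _ _)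
        (mul_le_mul_of_nonneg_left (hθ t htm) (norm_nonneg _))
    have h3 : (t:ℝ) * ⟪g t, x⟫ = (t:ℝ) * ⟪gradL (θ t), x⟫ - (t:ℝ) * ⟪gradL (θ t) - g t, x⟫ := by
      rw [inner_sub_left]; ring
    have hgσ : ‖g t‖^2 ≤ σ^2 := by nlinarith [hg t htm, norm_nonneg (g t)]
    have hid : μ₀/4 * ((t:ℝ)*((t:ℝ)-1)*‖x‖^2 - ((t:ℝ)+1)*(t:ℝ)*‖θ (t+1) - θstar‖^2)
        = -(μ₀*(t:ℝ)/2)*‖x‖^2 + (t:ℝ)*⟪g t, x⟫ - (t:ℝ)*α/2*‖g t‖^2 := by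
      rw [hsq, hαdef]
      field_simp
      ring
    have h1 : (t:ℝ) * (L (θ t) - L θstar + μ₀/2*‖x‖^2) ≤ (t:ℝ) * ⟪gradL (θ t), x⟫ := by
      apply mul_le_mul_of_nonneg_left _ hn0
      calc L (θ t) - L θstar + μ₀/2*‖x‖^2 = L (θ t) - L θstar + (μ₀/2)*‖x‖^2 := by ring
        _ ≤ ⟪gradL (θ t), x⟫ := hA
    have h2 : (t:ℝ) * ⟪gradL (θ t) - g t, x⟫ ≤ (t:ℝ) * (‖gradL (θ t) - g t‖ * Δ) :=
      mul_le_mul_of_nonneg_left hB hn0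
    have h4 : (t:ℝ)*α/2*‖g t‖^2 ≤ (t:ℝ)*α/2*σ^2 :=
      mul_le_mul_of_nonneg_left hgσ (by positivity)
    have h5 : (t:ℝ)*α/2*σ^2 = σ^2/μ₀ * ((t:ℝ)/((t:ℝ)+1)) := by
      rw [hαdef]; field_simp
    linarith
  refine le_trans (Finset.sum_le_sum key) ?_
  rw [Finset.sum_add_distrib, Finset.sum_add_distrib]
  have htel : ∑ t ∈ Finset.range T,
      μ₀/4 * ((t:ℝ)*((t:ℝ)-1)*‖θ t - θstar‖^2 - ((t:ℝ)+1)*(t:ℝ)*‖θ (t+1) - θstar‖^2) ≤ 0 := by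
    rw [← Finset.mul_sum]
    have e1 : ∑ t ∈ Finset.range T,
        ((t:ℝ)*((t:ℝ)-1)*‖θ t - θstar‖^2 - ((t:ℝ)+1)*(t:ℝ)*‖θ (t+1) - θstar‖^2)
        = ∑ t ∈ Finset.range T,
          ((fun s : ℕ => (s:ℝ)*((s:ℝ)-1)*‖θ s - θstar‖^2) t
            - (fun s : ℕ => (s:ℝ)*((s:ℝ)-1)*‖θ s - θstar‖^2) (t+1)) := by
      apply Finset.sum_congr rfl
      intro t _
      push_cast
      ring
    rw [e1, Finset.sum_range_sub']
    have hT1 : (1:ℝ) ≤ (T:ℝ) := by exact_mod_cast hT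
    have hT0 : (0:ℝ) ≤ (T:ℝ) := by linarith
    have hfact : (0:ℝ) ≤ (T:ℝ)*((T:ℝ)-1)*‖θ T - θstar‖^2 :=
      mul_nonneg (mul_nonneg hT0 (by linarith)) (sq_nonneg _)
    simp only [Nat.cast_zero]
    nlinarith [hμ₀.le]
  have hfrac : ∑ t ∈ Finset.range T, σ^2/μ₀ * ((t:ℝ)/((t:ℝ)+1)) ≤ σ^2 * T / μ₀ := by
    calc ∑ t ∈ Finset.range T, σ^2/μ₀ * ((t:ℝ)/((t:ℝ)+1))
        ≤ ∑ t ∈ Finset.range T, σ^2/μ₀ := by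
          apply Finset.sum_le_sum
          intro t _
          have hn1 : (0:ℝ) < (t:ℝ) + 1 := by positivity
          have : (t:ℝ)/((t:ℝ)+1) ≤ 1 := by
            rw [div_le_one hn1]; linarith
          nlinarith [sq_nonneg σ, div_nonneg (sq_nonneg σ) hμ₀.le]
      _ = σ^2 * T / μ₀ := by
          rw [Finset.sum_const, Finset.card_range]
          field_simp
          ring_nf
          rw [mul_comm μ₀, mul_assoc (σ^2), mul_inv_cancel₀ hμ, mul_one]
  linarith
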